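/- For every m ≥ 0, every simple module M over the real Clifford algebra of the split quadratic form of signature (m, m) on ℝ^{2m} has dimension 2^m as a real vector space (via restriction of scalars along ℝ → CliffordAlgebra). In particular all simple modules over this Clifford algebra have the same ℝ-dimension 2^m. (This is the uniqueness and dimension claim for the real irreducible representation of Cliff_{m,m} used in the appendix.) -/

import Mathlib

/-- The split quadratic form of signature `(m, m)` on `ℝ^{2m}`:
`x₁² + ⋯ + x_m² − y₁² − ⋯ − y_m²`. -/
noncomputable def splitForm (m : ℕ) : QuadraticForm ℝ ((Fin m ⊕ Fin m) → ℝ) :=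
  QuadraticMap.weightedSumSquares ℝ
    (Sum.elim (fun _ : Fin m => (1 : ℝ)) (fun _ : Fin m => (-1 : ℝ)))

noncomputable section
namespace SplitCliff

abbrev B (m : ℕ) := Fin m → Bool
abbrev V (m : ℕ) := B m → ℝ

def sgn (b : Bool) : ℝ := if b then -1 else 1

lemma sgn_mul_self (b : Bool) : sgn b * sgn b = 1 := by cases b <;> simp [sgn]
lemma sgn_not (b : Bool) : sgn (!b) = - sgn b := by cases b <;> simp [sgn]
lemma sgn_ne_zero (b : Bool) : sgn b ≠ 0 := by cases b <;> simp [sgn]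
lemma sgn_mul_not (b : Bool) : sgn b * sgn (!b) = -1 := by cases b <;> simp [sgn]

variable {m : ℕ}

def flip1 (i : Fin m) (S : B m) : B m := Function.update S i (!S i)

lemma flip1_apply (i : Fin m) (S : B m) (j : Fin m) :
    flip1 i S j = if j = i then !S i else S j := Function.update_apply ..

lemma flip1_same (i : Fin m) (S : B m) : flip1 i S i = !S i := by simp [flip1]

lemma flip1_ne (i : Fin m) (S : B m) {j : Fin m} (h : j ≠ i) : flip1 i S j = S j := by
  simp [flip1_apply, h]

lemma flip1_flip1 (i : Fin m) (S : B m) : flip1 i (flip1 i S) = S := by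
  funext j
  by_cases h : j = i
  · subst h; simp [flip1_apply]
  · simp [flip1_apply, h]

lemma flip1_comm (i j : Fin m) (S : B m) : flip1 i (flip1 j S) = flip1 j (flip1 i S) := by
  by_cases h : i = j
  · subst h; rfl
  · funext k
    by_cases hk : k = i
    · subst hk; simp [flip1_apply, h, Ne.symm h]
    · by_cases hk' : k = j
      · subst hk'; simp [flip1_apply, h, hk]
      · simp [flip1_apply, hk, hk']

def eps (i : Fin m) (S : B m) : ℝ := ∏ j ∈ Finset.univ.filter (· < i), sgn (S j)

lemma eps_ne_zero (i : Fin m) (S : B m) : eps i S ≠ 0 :=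
  Finset.prod_ne_zero_iff.2 fun j _ => sgn_ne_zero (S j)

lemma eps_mul_self (i : Fin m) (S : B m) : eps i S * eps i S = 1 := by
  rw [eps, ← Finset.prod_mul_distrib]
  exact Finset.prod_eq_one fun j _ => sgn_mul_self (S j)

lemma eps_flip1_of_not_lt (i j : Fin m) (S : B m) (h : ¬ j < i) :
    eps i (flip1 j S) = eps i S := by
  refine Finset.prod_congr rfl fun k hk => ?_
  rw [flip1_ne]
  rintro rfl
  exact h (Finset.mem_filter.1 hk).2

lemma eps_flip1_of_lt (i j : Fin m) (S : B m) (h : j < i) :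
    eps i (flip1 j S) = - eps i S := by
  have hj : j ∈ Finset.univ.filter (· < i) := by simp [h]
  rw [eps, eps, ← Finset.mul_prod_erase _ _ hj, ← Finset.mul_prod_erase _ (fun k => sgn (S k)) hj,
    flip1_same, sgn_not]
  rw [Finset.prod_congr rfl (fun k hk => ?_)]
  · ring
  · rw [flip1_ne]
    exact (Finset.mem_erase.1 hk).1

lemma eps_flip1_self (i : Fin m) (S : B m) : eps i (flip1 i S) = eps i S :=
  eps_flip1_of_not_lt i i S (lt_irrefl i)

def op (i : Fin m) (u : B m → ℝ) : Module.End ℝ (V m) where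
  toFun f := fun S => u S * f (flip1 i S)
  map_add' f g := by funext S; simp [mul_add]
  map_smul' r f := by funext S; simp only [Pi.smul_apply, smul_eq_mul, RingHom.id_apply]; ring

lemma op_apply (i : Fin m) (u : B m → ℝ) (f : V m) (S : B m) :
    op i u f S = u S * f (flip1 i S) := rfl

def cOp (i : Fin m) : Module.End ℝ (V m) := op i (eps i)
def dOp (i : Fin m) : Module.End ℝ (V m) := op i (fun S => -(eps i S * sgn (S i)))

lemma cOp_apply (i : Fin m) (f : V m) (S : B m) : cOp i f S = eps i S * f (flip1 i S) := rfl
lemma dOp_apply (i : Fin m) (f : V m) (S : B m) :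
    dOp i f S = -(eps i S * sgn (S i) * f (flip1 i S)) := by
  show -(eps i S * sgn (S i)) * f (flip1 i S) = _
  ring

lemma mul_apply (A C : Module.End ℝ (V m)) (f : V m) : (A * C) f = A (C f) := rfl

lemma cOp_sq (i : Fin m) : cOp i * cOp i = 1 := by
  refine LinearMap.ext fun f => funext fun S => ?_
  rw [mul_apply, cOp_apply, cOp_apply, eps_flip1_self, flip1_flip1, ← mul_assoc,
    eps_mul_self, one_mul]
  rfl

lemma dOp_sq (i : Fin m) : dOp i * dOp i = -1 := by
  refine LinearMap.ext fun f => funext fun S => ?_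
  rw [mul_apply, dOp_apply, dOp_apply, eps_flip1_self, flip1_flip1, flip1_same]
  have h1 := eps_mul_self i S
  have h2 := sgn_mul_not (S i)
  have : eps i S * eps i S * (sgn (S i) * sgn (!S i)) = -1 := by rw [h1, h2]; ring
  calc -(eps i S * sgn (S i) * -(eps i S * sgn (!S i) * f S))
      = eps i S * eps i S * (sgn (S i) * sgn (!S i)) * f S := by ring
    _ = -(f S) := by rw [this]; ring
    _ = (-1 : Module.End ℝ (V m)) f S := rfl

lemma cOp_mul_dOp_add (i : Fin m) : cOp i * dOp i + dOp i * cOp i = 0 := by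
  refine LinearMap.ext fun f => funext fun S => ?_
  have h1 := eps_mul_self i S
  show (cOp i * dOp i) f S + (dOp i * cOp i) f S = 0
  simp only [mul_apply, cOp_apply, dOp_apply, eps_flip1_self, flip1_flip1, flip1_same, sgn_not]
  calc eps i S * -(eps i S * -sgn (S i) * f S) + -(eps i S * sgn (S i) * (eps i S * f S))
      = (eps i S * eps i S) * (sgn (S i) * f S) + -((eps i S * eps i S) * (sgn (S i) * f S)) := by
        ring
    _ = 0 := by rw [h1]; ring

lemma cOp_mul_dOp_diag (i : Fin m) (f : V m) (S : B m) :
    (cOp i * dOp i) f S = sgn (S i) * f S := by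
  rw [mul_apply, cOp_apply, dOp_apply, eps_flip1_self, flip1_flip1, flip1_same, sgn_not]
  have h1 := eps_mul_self i S
  calc eps i S * -(eps i S * -sgn (S i) * f S)
      = (eps i S * eps i S) * (sgn (S i) * f S) := by ring
    _ = sgn (S i) * f S := by rw [h1]; ring

-- anticommutation for distinct indices
lemma cOp_cOp (i j : Fin m) (h : i ≠ j) : cOp i * cOp j + cOp j * cOp i = 0 := by
  refine LinearMap.ext fun f => funext fun S => ?_
  show _ + _ = (0:ℝ)
  simp only [mul_apply,
    cOp_apply]
  rw [flip1_comm j i]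
  rcases h.lt_or_gt with h' | h'
  · rw [eps_flip1_of_lt j i S h', eps_flip1_of_not_lt i j S (asymm h')]
    ring
  · rw [eps_flip1_of_lt i j S h', eps_flip1_of_not_lt j i S (asymm h')]
    ring

lemma dOp_dOp (i j : Fin m) (h : i ≠ j) : dOp i * dOp j + dOp j * dOp i = 0 := by
  refine LinearMap.ext fun f => funext fun S => ?_
  show _ + _ = (0:ℝ)
  simp only [mul_apply,
    dOp_apply]
  rw [flip1_comm j i, flip1_ne j S h, flip1_ne i S (Ne.symm h)]
  rcases h.lt_or_gt with h' | h'
  · rw [eps_flip1_of_lt j i S h', eps_flip1_of_not_lt i j S (asymm h')]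
    ring
  · rw [eps_flip1_of_lt i j S h', eps_flip1_of_not_lt j i S (asymm h')]
    ring

lemma cOp_dOp (i j : Fin m) (h : i ≠ j) : cOp i * dOp j + dOp j * cOp i = 0 := by
  refine LinearMap.ext fun f => funext fun S => ?_
  show _ + _ = (0:ℝ)
  simp only [mul_apply,
    cOp_apply, dOp_apply]
  rw [flip1_comm j i, flip1_ne i S (Ne.symm h)]
  rcases h.lt_or_gt with h' | h'
  · rw [eps_flip1_of_lt j i S h', eps_flip1_of_not_lt i j S (asymm h')]
    ring
  · rw [eps_flip1_of_lt i j S h', eps_flip1_of_not_lt j i S (asymm h')]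
    ring

abbrev I (m : ℕ) := Fin m ⊕ Fin m

def wt (m : ℕ) : I m → ℝ := Sum.elim (fun _ => (1 : ℝ)) (fun _ => (-1 : ℝ))

lemma cOp_dOp_all (i j : Fin m) : cOp i * dOp j + dOp j * cOp i = 0 := by
  by_cases h : i = j
  · subst h; exact cOp_mul_dOp_add i
  · exact cOp_dOp i j h

def gg : I m → Module.End ℝ (V m) := Sum.elim cOp dOp

lemma gg_sq (i : I m) : gg i * gg i = algebraMap ℝ (Module.End ℝ (V m)) (wt m i) := by
  cases i with
  | inl i => simp [gg, wt, cOp_sq, Algebra.algebraMap_eq_smul_one]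
  | inr i => simp [gg, wt, dOp_sq, Algebra.algebraMap_eq_smul_one]

lemma gg_anticomm {i j : I m} (h : i ≠ j) : gg i * gg j + gg j * gg i = 0 := by
  cases i with
  | inl i =>
    cases j with
    | inl j => exact cOp_cOp i j (by rintro rfl; exact h rfl)
    | inr j => exact cOp_dOp_all i j
  | inr i =>
    cases j with
    | inl j => have := cOp_dOp_all j i; rw [add_comm] at this; exact this
    | inr j => exact dOp_dOp i j (by rintro rfl; exact h rfl)

def ell (m : ℕ) : ((I m → ℝ)) →ₗ[ℝ] Module.End ℝ (V m) :=
  (Pi.basisFun ℝ (I m)).constr ℝ gg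

lemma ell_apply (v : I m → ℝ) : ell m v = ∑ i, v i • gg i := by
  rw [ell, Module.Basis.constr_apply_fintype, Pi.basisFun_equivFun]
  rfl

lemma ell_single (i : I m) : ell m (Pi.single i 1) = gg i := by
  rw [← Pi.basisFun_apply ℝ (I m) i, ell, Module.Basis.constr_basis]

lemma splitForm_apply (v : I m → ℝ) : splitForm m v = ∑ i, wt m i * (v i * v i) := by
  rw [splitForm, QuadraticMap.weightedSumSquares_apply]
  rfl

lemma ell_sq (v : I m → ℝ) :
    ell m v * ell m v = algebraMap ℝ (Module.End ℝ (V m)) (splitForm m v) := by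
  classical
  set t : I m → I m → Module.End ℝ (V m) :=
    fun i j => (v i * v j) • (gg i * gg j) with ht
  have hmul : ell m v * ell m v = ∑ i, ∑ j, t i j := by
    rw [ell_apply, Finset.sum_mul_sum]
    refine Finset.sum_congr rfl fun i _ => Finset.sum_congr rfl fun j _ => ?_
    rw [ht, smul_mul_assoc, mul_smul_comm, smul_smul]
  have hoff : ∀ i j : I m, i ≠ j → t i j + t j i = 0 := by
    intro i j hij
    simp only [ht]
    have := gg_anticomm hij
    have hgj : gg j * gg i = -(gg i * gg j) := by
      rw [eq_neg_iff_add_eq_zero, add_comm]; exact this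
    rw [hgj, mul_comm (v j) (v i), smul_neg, add_neg_cancel]
  have hdiag : ∀ i : I m, t i i = (wt m i * (v i * v i)) • (1 : Module.End ℝ (V m)) := by
    intro i
    simp only [ht]
    rw [gg_sq, Algebra.algebraMap_eq_smul_one, smul_smul, mul_comm]
  have hRHS : algebraMap ℝ (Module.End ℝ (V m)) (splitForm m v)
      = ∑ i, t i i := by
    rw [splitForm_apply, map_sum]
    refine Finset.sum_congr rfl fun i _ => ?_
    rw [hdiag, Algebra.algebraMap_eq_smul_one]
  rw [hmul, hRHS]
  have key : (2 : ℝ) • (∑ i, ∑ j, t i j) = (2 : ℝ) • (∑ i, t i i) := by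
    have hswap : (∑ i, ∑ j, t i j) = ∑ i, ∑ j, t j i := Finset.sum_comm
    have h1 : (∑ i, ∑ j, t i j) + (∑ i, ∑ j, t i j)
        = ∑ i, ∑ j, (t i j + t j i) := by
      nth_rewrite 2 [hswap]
      rw [← Finset.sum_add_distrib]
      refine Finset.sum_congr rfl fun i _ => ?_
      rw [← Finset.sum_add_distrib]
    have h2 : ∀ i : I m, (∑ j, (t i j + t j i)) = t i i + t i i := by
      intro i
      refine Finset.sum_eq_single_of_mem i (Finset.mem_univ i) fun j _ hj => ?_
      exact hoff i j (Ne.symm hj)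
    rw [two_smul, two_smul, h1]
    rw [Finset.sum_congr rfl fun i _ => h2 i, Finset.sum_add_distrib]
  exact smul_right_injective (Module.End ℝ (V m)) (two_ne_zero) key

def phi (m : ℕ) : CliffordAlgebra (splitForm m) →ₐ[ℝ] Module.End ℝ (V m) :=
  CliffordAlgebra.lift _ ⟨ell m, ell_sq⟩

lemma phi_iota (v : I m → ℝ) : phi m (CliffordAlgebra.ι _ v) = ell m v := by
  rw [phi, CliffordAlgebra.lift_ι_apply]

lemma gg_mem_range (i : I m) : gg i ∈ (phi m).range := by
  have h : phi m (CliffordAlgebra.ι _ (Pi.single i 1)) = gg i := by rw [phi_iota, ell_single]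
  exact ⟨_, h⟩

lemma cOp_mem_range (i : Fin m) : cOp i ∈ (phi m).range := gg_mem_range (Sum.inl i)
lemma dOp_mem_range (i : Fin m) : dOp i ∈ (phi m).range := gg_mem_range (Sum.inr i)

def factor (S : B m) (i : Fin m) : Module.End ℝ (V m) :=
  (2⁻¹ : ℝ) • (1 + sgn (S i) • (cOp i * dOp i))

lemma factor_apply (S : B m) (i : Fin m) (f : V m) (T : B m) :
    factor S i f T = (if S i = T i then 1 else 0) * f T := by
  show (2⁻¹ : ℝ) • ((1 + sgn (S i) • (cOp i * dOp i)) f) T = _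
  simp only [LinearMap.add_apply, Module.End.one_apply, LinearMap.smul_apply, Pi.smul_apply,
    Pi.add_apply, smul_eq_mul]
  rw [cOp_mul_dOp_diag]
  cases hS : S i <;> cases hT : T i <;> simp [sgn] <;> ring

lemma factor_mem_range (S : B m) (i : Fin m) : factor S i ∈ (phi m).range := by
  refine Subalgebra.smul_mem _ (add_mem (one_mem _) (Subalgebra.smul_mem _ ?_ _)) _
  exact mul_mem (cOp_mem_range i) (dOp_mem_range i)

def P (S : B m) : Module.End ℝ (V m) := ((List.finRange m).map (factor S)).prod

lemma prod_factor_spec (S : B m) (l : List (Fin m)) (f : V m) (T : B m) :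
    ((l.map (factor S)).prod) f T = (if (∀ i ∈ l, S i = T i) then 1 else 0) * f T := by
  induction l generalizing f with
  | nil => simp
  | cons i l ih =>
    rw [List.map_cons, List.prod_cons, mul_apply, factor_apply, ih]
    by_cases h1 : S i = T i <;> by_cases h2 : ∀ j ∈ l, S j = T j <;>
      simp [h1, h2]

lemma P_mem_range (S : B m) : P S ∈ (phi m).range := by
  refine list_prod_mem fun x hx => ?_
  obtain ⟨i, -, rfl⟩ := List.mem_map.1 hx
  exact factor_mem_range S i

lemma P_apply (S : B m) (f : V m) : P S f = f S • (Pi.single S 1 : V m) := by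
  funext T
  rw [P, prod_factor_spec]
  have hcond : (∀ i ∈ List.finRange m, S i = T i) ↔ T = S := by
    constructor
    · intro h; funext i; exact (h i (List.mem_finRange i)).symm
    · rintro rfl i -; rfl
  by_cases h : T = S
  · subst h
    rw [if_pos (hcond.2 rfl), one_mul, Pi.smul_apply, Pi.single_eq_same, smul_eq_mul, mul_one]
  · rw [if_neg (fun hc => h (hcond.1 hc)), zero_mul, Pi.smul_apply, Pi.single_apply, if_neg h]
    simp

lemma cOp_single (i : Fin m) (R : B m) :
    cOp i ((Pi.single R 1 : V m)) = eps i R • (Pi.single (flip1 i R) 1 : V m) := by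
  funext S
  rw [cOp_apply]
  have hiff : flip1 i S = R ↔ S = flip1 i R := by
    constructor
    · rintro rfl; rw [flip1_flip1]
    · rintro rfl; rw [flip1_flip1]
  by_cases h : S = flip1 i R
  · subst h
    rw [flip1_flip1, eps_flip1_self, Pi.single_apply, if_pos rfl, Pi.smul_apply,
      Pi.single_eq_same]
    simp
  · rw [Pi.single_apply, if_neg (fun hc => h (hiff.1 hc)), Pi.smul_apply, Pi.single_apply,
      if_neg h]
    simp

lemma prod_cOp_single (l : List (Fin m)) (R : B m) :
    ∃ k : ℝ, k ≠ 0 ∧ ((l.map cOp).prod) ((Pi.single R 1 : V m))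
      = k • (Pi.single (l.foldr flip1 R) 1 : V m) := by
  induction l with
  | nil => exact ⟨1, one_ne_zero, by simp⟩
  | cons i l ih =>
    obtain ⟨k, hk, hEq⟩ := ih
    refine ⟨k * eps i (l.foldr flip1 R), mul_ne_zero hk (eps_ne_zero _ _), ?_⟩
    rw [List.map_cons, List.prod_cons, mul_apply, hEq, map_smul, cOp_single]
    rw [smul_smul]
    rfl

lemma foldr_flip1_apply (l : List (Fin m)) (hl : l.Nodup) (R : B m) (j : Fin m) :
    (l.foldr flip1 R) j = if j ∈ l then !(R j) else R j := by
  induction l with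
  | nil => simp
  | cons i l ih =>
    obtain ⟨hi, hl'⟩ := List.nodup_cons.1 hl
    show (flip1 i (l.foldr flip1 R)) j = _
    by_cases h : j = i
    · subst h
      rw [flip1_same, ih hl', if_neg hi, if_pos (List.mem_cons_self)]
    · rw [flip1_ne _ _ h, ih hl']
      simp [List.mem_cons, h]

def diffL (S T : B m) : List (Fin m) := (List.finRange m).filter (fun i => S i != T i)

lemma foldr_diffL (S T : B m) : (diffL S T).foldr flip1 S = T := by
  funext j
  have hnd : (diffL S T).Nodup := (List.nodup_finRange m).filter _
  rw [foldr_flip1_apply _ hnd]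
  by_cases h : j ∈ diffL S T
  · rw [if_pos h]
    have := (List.mem_filter.1 h).2
    have hne : S j ≠ T j := by simpa using this
    cases hS : S j <;> cases hT : T j <;> simp_all
  · rw [if_neg h]
    have : ¬ (S j != T j) = true := by
      intro hc
      exact h (List.mem_filter.2 ⟨List.mem_finRange j, hc⟩)
    simpa using this

def EU (T S : B m) : Module.End ℝ (V m) :=
  (LinearMap.proj S).smulRight ((Pi.single T 1 : V m))

lemma EU_apply (T S : B m) (f : V m) : EU T S f = f S • (Pi.single T 1 : V m) := rfl

lemma sandwich (S T : B m) (W : Module.End ℝ (V m)) :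
    P T * W * P S = ((W ((Pi.single S 1 : V m))) T) • EU T S := by
  refine LinearMap.ext fun f => ?_
  show P T (W (P S f)) = _
  rw [P_apply S f, map_smul, map_smul, P_apply T, LinearMap.smul_apply, EU_apply]
  exact smul_comm _ _ _

lemma EU_mem_range (T S : B m) : EU T S ∈ (phi m).range := by
  obtain ⟨k, hk, hEq⟩ := prod_cOp_single (diffL S T) S
  rw [foldr_diffL] at hEq
  set W : Module.End ℝ (V m) := ((diffL S T).map cOp).prod with hW
  have hWmem : W ∈ (phi m).range := by
    refine list_prod_mem fun x hx => ?_
    obtain ⟨i, -, rfl⟩ := List.mem_map.1 hx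
    exact cOp_mem_range i
  have hval : (W ((Pi.single S 1 : V m))) T = k := by
    rw [hEq, Pi.smul_apply, Pi.single_eq_same, smul_eq_mul, mul_one]
  have hsand := sandwich S T W
  rw [hval] at hsand
  have : EU T S = k⁻¹ • (P T * W * P S) := by
    rw [hsand, smul_smul, inv_mul_cancel₀ hk, one_smul]
  rw [this]
  exact Subalgebra.smul_mem _ (mul_mem (mul_mem (P_mem_range T) hWmem) (P_mem_range S)) _

lemma pi_single_expand (f : V m) : f = ∑ S : B m, f S • ((Pi.single S 1 : V m) : V m) := by
  funext j
  rw [Finset.sum_apply]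
  simp [Pi.single_apply]

lemma phi_surjective : Function.Surjective (phi m) := by
  intro g
  have hg : g = ∑ S : B m, ∑ T : B m, ((g ((Pi.single S 1 : V m))) T) • EU T S := by
    refine LinearMap.ext fun f => ?_
    conv_lhs => rw [pi_single_expand f, map_sum]
    rw [LinearMap.sum_apply]
    refine Finset.sum_congr rfl fun S _ => ?_
    rw [map_smul, LinearMap.sum_apply]
    funext R
    rw [Finset.sum_apply]
    simp only [LinearMap.smul_apply, EU_apply, Pi.smul_apply, Pi.single_eq_same, smul_eq_mul,
      mul_one, Pi.single_apply, mul_ite, ite_mul, mul_zero, zero_mul, mul_one]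
    rw [Finset.sum_ite_eq (Finset.univ : Finset (B m)) R]
    simp [mul_comm]
  have : g ∈ (phi m).range := by
    rw [hg]
    exact sum_mem fun S _ => sum_mem fun T _ =>
      Subalgebra.smul_mem _ (EU_mem_range T S) _
  exact this

lemma pi_expand {ι : Type*} [Fintype ι] [DecidableEq ι] (f : ι → ℝ) :
    f = ∑ i, f i • (Pi.single i 1 : ι → ℝ) := by
  funext j
  rw [Finset.sum_apply]
  simp [Pi.single_apply]

def gen (m : ℕ) (i : I m) : CliffordAlgebra (splitForm m) :=
  CliffordAlgebra.ι _ (Pi.single i 1)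

lemma splitForm_single (i : I m) : splitForm m (Pi.single i 1) = wt m i := by
  rw [splitForm_apply]
  rw [Finset.sum_eq_single_of_mem i (Finset.mem_univ i)]
  · simp
  · intro j _ hj
    simp [Pi.single_apply, hj]

lemma polar_single_eq_zero {i j : I m} (h : i ≠ j) :
    QuadraticMap.polar (⇑(splitForm m)) (Pi.single i 1) (Pi.single j 1) = 0 := by
  rw [QuadraticMap.polar, splitForm_apply, splitForm_apply, splitForm_apply,
    ← Finset.sum_sub_distrib, ← Finset.sum_sub_distrib]
  refine Finset.sum_eq_zero fun k _ => ?_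
  by_cases hk : k = i
  · subst hk
    simp [Pi.single_apply, h, Ne.symm h]
  · by_cases hk' : k = j
    · subst hk'
      simp [Pi.single_apply, hk, Ne.symm hk]
    · simp [Pi.single_apply, hk, hk']

lemma gen_sq (i : I m) :
    gen m i * gen m i = algebraMap ℝ (CliffordAlgebra (splitForm m)) (wt m i) := by
  rw [gen, CliffordAlgebra.ι_sq_scalar, splitForm_single]

lemma gen_anticomm {i j : I m} (h : i ≠ j) : gen m i * gen m j = -(gen m j * gen m i) := by
  have hsw := CliffordAlgebra.ι_mul_ι_add_swap (Q := splitForm m)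
    (Pi.single i 1) (Pi.single j 1)
  rw [polar_single_eq_zero h, map_zero] at hsw
  rw [eq_neg_iff_add_eq_zero]
  exact hsw

def gen' (m : ℕ) (k : Fin (m + m)) : CliffordAlgebra (splitForm m) :=
  gen m (finSumFinEquiv.symm k)

lemma gen'_sq (k : Fin (m + m)) :
    gen' m k * gen' m k
      = algebraMap ℝ (CliffordAlgebra (splitForm m)) (wt m (finSumFinEquiv.symm k)) :=
  gen_sq _

lemma gen'_anticomm {k l : Fin (m + m)} (h : k ≠ l) :
    gen' m k * gen' m l = -(gen' m l * gen' m k) :=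
  gen_anticomm (fun hc => h (finSumFinEquiv.symm.injective hc))

def sortedProds (m : ℕ) : Set (CliffordAlgebra (splitForm m)) :=
  {x | ∃ l : List (Fin (m + m)), l.Pairwise (· < ·) ∧ x = (l.map (gen' m)).prod}

lemma gen_mul_prod_mem (l : List (Fin (m + m))) (hl : l.Pairwise (· < ·)) :
    ∀ i : Fin (m + m), gen' m i * (l.map (gen' m)).prod ∈
      Submodule.span ℝ {x | ∃ l' : List (Fin (m + m)), l'.Pairwise (· < ·) ∧
        (∀ a ∈ l', a ∈ i :: l) ∧ x = (l'.map (gen' m)).prod} := by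
  induction l with
  | nil =>
    intro i
    refine Submodule.subset_span ⟨[i], List.pairwise_singleton _ i, fun a ha => ha, ?_⟩
    simp
  | cons j l ih =>
    intro i
    have hjl : ∀ b ∈ l, j < b := (List.pairwise_cons.1 hl).1
    have hl' : l.Pairwise (· < ·) := (List.pairwise_cons.1 hl).2
    rcases lt_trichotomy i j with h | h | h
    · refine Submodule.subset_span ⟨i :: j :: l, ?_, fun a ha => ha, by simp⟩
      rw [List.pairwise_cons]
      exact ⟨fun b hb => by
        rcases List.mem_cons.1 hb with rfl | hb'
        · exact h
        · exact h.trans (hjl b hb'), hl⟩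
    · subst h
      rw [List.map_cons, List.prod_cons, ← mul_assoc, gen'_sq, ← Algebra.smul_def]
      refine Submodule.smul_mem _ _ (Submodule.subset_span ⟨l, hl', ?_, rfl⟩)
      exact fun a ha => List.mem_cons_of_mem _ (List.mem_cons_of_mem _ ha)
    · have key : gen' m i * ((j :: l).map (gen' m)).prod
          = -(gen' m j * (gen' m i * (l.map (gen' m)).prod)) := by
        rw [List.map_cons, List.prod_cons, ← mul_assoc, gen'_anticomm (ne_of_gt h), neg_mul,
          mul_assoc]
      rw [key]
      refine neg_mem ?_
      have ihi := ih hl' i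
      have push : ∀ y (hy : y ∈ Submodule.span ℝ {x | ∃ l' : List (Fin (m + m)),
            l'.Pairwise (· < ·) ∧ (∀ a ∈ l', a ∈ i :: l) ∧ x = (l'.map (gen' m)).prod}),
          gen' m j * y ∈ Submodule.span ℝ {x | ∃ l' : List (Fin (m + m)),
            l'.Pairwise (· < ·) ∧ (∀ a ∈ l', a ∈ i :: j :: l) ∧ x = (l'.map (gen' m)).prod} := by
        intro y hy
        induction hy using Submodule.span_induction with
        | mem x hx =>
          obtain ⟨l'', hs, hmem, rfl⟩ := hx
          have hgt : ∀ a ∈ l'', j < a := by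
            intro a ha
            rcases List.mem_cons.1 (hmem a ha) with rfl | ha'
            · exact h
            · exact hjl a ha'
          refine Submodule.subset_span ⟨j :: l'', ?_, ?_, by simp⟩
          · exact List.pairwise_cons.2 ⟨hgt, hs⟩
          · intro a ha
            rcases List.mem_cons.1 ha with rfl | ha'
            · exact List.mem_cons_of_mem _ (List.mem_cons_self)
            · rcases List.mem_cons.1 (hmem a ha') with rfl | ha''
              · exact List.mem_cons_self
              · exact List.mem_cons_of_mem _ (List.mem_cons_of_mem _ ha'')
        | zero => rw [mul_zero]; exact zero_mem _
        | add x y _ _ hx hy => rw [mul_add]; exact add_mem hx hy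
        | smul a x _ hx => rw [mul_smul_comm]; exact Submodule.smul_mem _ _ hx
      exact push _ ihi

lemma gen_mul_span_mem (i : Fin (m + m)) {y : CliffordAlgebra (splitForm m)}
    (hy : y ∈ Submodule.span ℝ (sortedProds m)) :
    gen' m i * y ∈ Submodule.span ℝ (sortedProds m) := by
  induction hy using Submodule.span_induction with
  | mem x hx =>
    obtain ⟨l, hs, rfl⟩ := hx
    refine Submodule.span_le.2 ?_ (gen_mul_prod_mem l hs i)
    rintro x ⟨l', hs', -, rfl⟩
    exact Submodule.subset_span ⟨l', hs', rfl⟩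
  | zero => rw [mul_zero]; exact zero_mem _
  | add x y _ _ hx hy => rw [mul_add]; exact add_mem hx hy
  | smul a x _ hx => rw [mul_smul_comm]; exact Submodule.smul_mem _ _ hx

lemma prod_mul_span_mem (l : List (Fin (m + m))) {y : CliffordAlgebra (splitForm m)}
    (hy : y ∈ Submodule.span ℝ (sortedProds m)) :
    (l.map (gen' m)).prod * y ∈ Submodule.span ℝ (sortedProds m) := by
  induction l with
  | nil => simpa using hy
  | cons j l ih =>
    rw [List.map_cons, List.prod_cons, mul_assoc]
    exact gen_mul_span_mem j ih

lemma one_mem_span : (1 : CliffordAlgebra (splitForm m)) ∈ Submodule.span ℝ (sortedProds m) :=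
  Submodule.subset_span ⟨[], List.Pairwise.nil, by simp⟩

lemma span_sortedProds_eq_top : Submodule.span ℝ (sortedProds m) = ⊤ := by
  rw [eq_top_iff]
  rintro x -
  induction x using CliffordAlgebra.induction with
  | algebraMap r =>
    rw [Algebra.algebraMap_eq_smul_one]
    exact Submodule.smul_mem _ _ one_mem_span
  | ι v =>
    have hv : CliffordAlgebra.ι (splitForm m) v = ∑ i, v i • gen m i := by
      conv_lhs => rw [pi_expand v, map_sum]
      exact Finset.sum_congr rfl fun i _ => by rw [map_smul]; rfl
    rw [hv]
    refine sum_mem fun i _ => Submodule.smul_mem _ _ ?_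
    have : gen m i = gen' m (finSumFinEquiv i) := by
      rw [gen', Equiv.symm_apply_apply]
    rw [this]
    exact Submodule.subset_span ⟨[finSumFinEquiv i], List.pairwise_singleton _ _, by simp⟩
  | mul a b ha hb =>
    induction ha using Submodule.span_induction with
    | mem x hx =>
      obtain ⟨l, hs, rfl⟩ := hx
      exact prod_mul_span_mem l hb
    | zero => rw [zero_mul]; exact zero_mem _
    | add x y _ _ hx hy => rw [add_mul]; exact add_mem hx hy
    | smul r x _ hx => rw [smul_mul_assoc]; exact Submodule.smul_mem _ _ hx
  | add a b ha hb => exact add_mem ha hb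

noncomputable instance (m : ℕ) : DecidableEq (CliffordAlgebra (splitForm m)) :=
  Classical.decEq _

def FF (m : ℕ) (s : Finset (Fin (m + m))) : CliffordAlgebra (splitForm m) :=
  ((s.sort (· ≤ ·)).map (gen' m)).prod

lemma sortedProds_subset_range : sortedProds m ⊆ Set.range (FF m) := by
  rintro x ⟨l, hs, rfl⟩
  refine ⟨l.toFinset, ?_⟩
  rw [FF, (List.toFinset_sort (· ≤ ·) hs.nodup).2 (hs.imp fun h => le_of_lt h)]

lemma span_image_FF_eq_top :
    Submodule.span ℝ ((Finset.univ.image (FF m) : Finset (CliffordAlgebra (splitForm m))) :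
      Set (CliffordAlgebra (splitForm m))) = ⊤ := by
  rw [Finset.coe_image, Finset.coe_univ, Set.image_univ]
  rw [eq_top_iff, ← span_sortedProds_eq_top]
  exact Submodule.span_mono sortedProds_subset_range

lemma cliff_finite : Module.Finite ℝ (CliffordAlgebra (splitForm m)) :=
  ⟨⟨Finset.univ.image (FF m), span_image_FF_eq_top⟩⟩

lemma cliff_finrank_le :
    Module.finrank ℝ (CliffordAlgebra (splitForm m)) ≤ 2 ^ (m + m) := by
  have h1 : Module.finrank ℝ (CliffordAlgebra (splitForm m))
      = Module.finrank ℝ (Submodule.span ℝ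
          ((Finset.univ.image (FF m) : Finset (CliffordAlgebra (splitForm m))) :
            Set (CliffordAlgebra (splitForm m)))) := by
    rw [span_image_FF_eq_top, finrank_top]
  rw [h1]
  refine le_trans (finrank_span_finset_le_card _) (le_trans Finset.card_image_le ?_)
  rw [Finset.card_univ, Fintype.card_finset, Fintype.card_fin]

lemma finrank_V : Module.finrank ℝ (V m) = 2 ^ m := by
  rw [Module.finrank_pi, Fintype.card_fun, Fintype.card_bool, Fintype.card_fin]

lemma finrank_End : Module.finrank ℝ (Module.End ℝ (V m)) = 2 ^ (m + m) := by
  have h : Module.finrank ℝ (V m →ₗ[ℝ] V m) = 2 ^ (m + m) := by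
    rw [Module.finrank_linearMap, finrank_V, ← pow_add]
  exact h

lemma phi_injective : Function.Injective (phi m) := by
  have hfin : Module.Finite ℝ (CliffordAlgebra (splitForm m)) := cliff_finite
  have : FiniteDimensional ℝ (CliffordAlgebra (splitForm m)) := hfin
  have hrn := LinearMap.finrank_range_add_finrank_ker (phi m).toLinearMap
  have hrange : LinearMap.range (phi m).toLinearMap = ⊤ := by
    rw [LinearMap.range_eq_top]
    exact phi_surjective
  rw [hrange, finrank_top, finrank_End] at hrn
  have hker : Module.finrank ℝ (LinearMap.ker (phi m).toLinearMap) = 0 := by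
    have := cliff_finrank_le (m := m)
    omega
  have hbot : LinearMap.ker (phi m).toLinearMap = ⊥ := Submodule.finrank_eq_zero.1 hker
  have := LinearMap.ker_eq_bot.1 hbot
  exact this

def phiEquiv (m : ℕ) : CliffordAlgebra (splitForm m) ≃ₐ[ℝ] Module.End ℝ (V m) :=
  AlgEquiv.ofBijective (phi m) ⟨phi_injective, phi_surjective⟩

lemma sum_EU_diag : (∑ S : B m, EU S S) = (1 : Module.End ℝ (V m)) := by
  refine LinearMap.ext fun f => ?_
  rw [LinearMap.sum_apply, Module.End.one_apply]
  conv_rhs => rw [pi_expand f]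
  exact Finset.sum_congr rfl fun S _ => EU_apply S S f

end SplitCliff

end

open SplitCliff

/-- Every simple module over the real Clifford algebra `Cliff_{m,m}` of the split form of
signature `(m, m)` has real dimension `2^m` (after restriction of scalars along
`ℝ → Cliff_{m,m}`). -/
theorem simpleModule_cliffordAlgebra_split_finrank (m : ℕ) (M : Type)
    [AddCommGroup M] [Module (CliffordAlgebra (splitForm m)) M]
    [Module ℝ M] [IsScalarTower ℝ (CliffordAlgebra (splitForm m)) M]
    [IsSimpleModule (CliffordAlgebra (splitForm m)) M] :
    Module.finrank ℝ M = 2 ^ m := by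
  classical
  set e := phiEquiv m with he
  have hnt : Nontrivial M := IsSimpleModule.nontrivial (CliffordAlgebra (splitForm m)) M
  obtain ⟨x, hx⟩ := exists_ne (0 : M)
  have hsmul : ∀ (r : ℝ) (u : Module.End ℝ (V m)), e.symm (r • u) = r • e.symm u := by
    intro r u
    simpa using map_smul e.symm.toLinearEquiv r u
  -- find S0
  have hex : ∃ S0 : B m, e.symm (EU S0 S0) • x ≠ 0 := by
    by_contra hcon
    push_neg at hcon
    apply hx
    have h1 : (1 : CliffordAlgebra (splitForm m)) = ∑ S : B m, e.symm (EU S S) := by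
      calc (1 : CliffordAlgebra (splitForm m)) = e.symm 1 := (map_one e.symm).symm
        _ = e.symm (∑ S : B m, EU S S) := by rw [sum_EU_diag]
        _ = ∑ S : B m, e.symm (EU S S) := map_sum e.symm _ _
    calc x = (1 : CliffordAlgebra (splitForm m)) • x := (one_smul _ _).symm
      _ = ∑ S : B m, e.symm (EU S S) • x := by rw [h1, Finset.sum_smul]
      _ = 0 := Finset.sum_eq_zero fun S _ => hcon S
  obtain ⟨S0, hS0⟩ := hex
  -- the comparison map
  have smulRight_op : ∀ (c : CliffordAlgebra (splitForm m)) (v : V m),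
      (LinearMap.proj S0 : V m →ₗ[ℝ] ℝ).smulRight (e c v)
        = e c * ((LinearMap.proj S0 : V m →ₗ[ℝ] ℝ).smulRight v) := by
    intro c v
    refine LinearMap.ext fun f => ?_
    show f S0 • e c v = e c (f S0 • v)
    rw [map_smul]
  let theta : V m →ₗ[ℝ] M :=
    { toFun := fun v => e.symm ((LinearMap.proj S0 : V m →ₗ[ℝ] ℝ).smulRight v) • x
      map_add' := by
        intro v w
        have : (LinearMap.proj S0 : V m →ₗ[ℝ] ℝ).smulRight (v + w)
            = (LinearMap.proj S0 : V m →ₗ[ℝ] ℝ).smulRight v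
              + (LinearMap.proj S0 : V m →ₗ[ℝ] ℝ).smulRight w := by
          refine LinearMap.ext fun f => ?_
          show f S0 • (v + w) = f S0 • v + f S0 • w
          rw [smul_add]
        show e.symm ((LinearMap.proj S0 : V m →ₗ[ℝ] ℝ).smulRight (v + w)) • x = _
        rw [this, map_add, add_smul]
      map_smul' := by
        intro r v
        have : (LinearMap.proj S0 : V m →ₗ[ℝ] ℝ).smulRight (r • v)
            = r • (LinearMap.proj S0 : V m →ₗ[ℝ] ℝ).smulRight v := by
          refine LinearMap.ext fun f => ?_
          show f S0 • (r • v) = r • (f S0 • v)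
          rw [smul_comm]
        show e.symm ((LinearMap.proj S0 : V m →ₗ[ℝ] ℝ).smulRight (r • v)) • x = _
        rw [this, hsmul, smul_assoc]
        rfl }
  have theta_apply : ∀ v : V m,
      theta v = e.symm ((LinearMap.proj S0 : V m →ₗ[ℝ] ℝ).smulRight v) • x := fun _ => rfl
  have key : ∀ (c : CliffordAlgebra (splitForm m)) (v : V m),
      theta (e c v) = c • theta v := by
    intro c v
    rw [theta_apply, theta_apply, smulRight_op, map_mul, AlgEquiv.symm_apply_apply, mul_smul]
  have theta_single : theta (Pi.single S0 1) = e.symm (EU S0 S0) • x := rfl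
  have theta_ne : theta (Pi.single S0 1) ≠ 0 := by rw [theta_single]; exact hS0
  -- surjectivity
  let N : Submodule (CliffordAlgebra (splitForm m)) M :=
    { carrier := Set.range theta
      add_mem' := by rintro a b ⟨v, rfl⟩ ⟨w, rfl⟩; exact ⟨v + w, map_add theta v w⟩
      zero_mem' := ⟨0, map_zero theta⟩
      smul_mem' := by
        rintro c a ⟨v, rfl⟩
        exact ⟨e c v, key c v⟩ }
  have hNne : N ≠ ⊥ := by
    intro hbot
    apply theta_ne
    have : theta (Pi.single S0 1) ∈ N := ⟨_, rfl⟩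
    rw [hbot] at this
    exact (Submodule.mem_bot _).1 this
  have hNtop : N = ⊤ := (eq_bot_or_eq_top N).resolve_left hNne
  have hsurj : Function.Surjective theta := by
    intro y
    have : y ∈ N := hNtop ▸ Submodule.mem_top
    exact this
  -- injectivity
  have hker : ∀ v : V m, theta v = 0 → v = 0 := by
    intro v hv
    by_contra hv0
    have hS1 : ∃ S1 : B m, v S1 ≠ 0 := by
      by_contra hc
      push_neg at hc
      exact hv0 (funext fun S => hc S)
    obtain ⟨S1, hS1⟩ := hS1
    apply theta_ne
    have hall : ∀ w : V m, theta w = 0 := by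
      intro w
      set u : Module.End ℝ (V m) :=
        ((v S1)⁻¹ • (LinearMap.proj S1 : V m →ₗ[ℝ] ℝ)).smulRight w with hu
      have huv : u v = w := by
        show ((v S1)⁻¹ • (v S1)) • w = w
        rw [smul_eq_mul, inv_mul_cancel₀ hS1, one_smul]
      have : theta w = e.symm u • theta v := by
        rw [← key (e.symm u) v]
        rw [AlgEquiv.apply_symm_apply, huv]
      rw [this, hv, smul_zero]
    exact hall _
  have hinj : Function.Injective theta := by
    intro a b hab
    have : theta (a - b) = 0 := by rw [map_sub, hab, sub_self]
    have := hker _ this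
    exact sub_eq_zero.1 this
  have equiv : V m ≃ₗ[ℝ] M := LinearEquiv.ofBijective theta ⟨hinj, hsurj⟩
  rw [← equiv.finrank_eq, finrank_V]
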